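/- The function f(x) = sin(x)/(x·(cos(x) - e^{x·cot(x)-1} + 1)) is strictly increasing on (0, π/2), with range (1, 2e/(π(e-1))). -/

import Mathlib

open Real Set Filter Topology

noncomputable def Q (x : ℝ) : ℝ := x^2 + x * sin x * cos x - 2 * sin x ^ 2

-- sin x - x cos x > 0 on (0, π/2)
lemma sin_sub_mul_cos_pos {x : ℝ} (h1 : 0 < x) (h2 : x < π/2) : x * cos x < sin x := by
  have hc : 0 < cos x := cos_pos_of_mem_Ioo ⟨by linarith [pi_div_two_pos], h2⟩
  have := lt_tan h1 h2
  rw [tan_eq_sin_div_cos, lt_div_iff₀ hc] at this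
  linarith


noncomputable def Q' (x : ℝ) : ℝ := 2*x - 3 * sin x * cos x + x * (cos x ^ 2 - sin x ^ 2)

lemma hasDerivAt_Q (x : ℝ) : HasDerivAt Q (Q' x) x := by
  have h : HasDerivAt (fun x : ℝ => x^2 + x * sin x * cos x - 2 * sin x ^ 2)
      (2*x + ((1 * sin x + x * cos x) * cos x + (x * sin x) * (-sin x)) - 2 * (2 * sin x ^ 1 * cos x)) x := by
    have h1 : HasDerivAt (fun x : ℝ => x^2) (2*x) x := by
      simpa using (hasDerivAt_pow 2 x)
    have h2 : HasDerivAt (fun x : ℝ => x * sin x * cos x)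
        ((1 * sin x + x * cos x) * cos x + (x * sin x) * (-sin x)) x :=
      ((hasDerivAt_id x).mul (hasDerivAt_sin x)).mul (hasDerivAt_cos x)
    have h3 : HasDerivAt (fun x : ℝ => 2 * sin x ^ 2) (2 * (2 * sin x ^ 1 * cos x)) x :=
      (((hasDerivAt_sin x).pow 2)).const_mul 2
    exact (h1.add h2).sub h3
  refine h.congr_deriv ?_
  unfold Q'; ring

lemma hasDerivAt_Q' (x : ℝ) : HasDerivAt Q' (4 * sin x * (sin x - x * cos x)) x := by
  have h : HasDerivAt (fun x : ℝ => 2*x - 3 * sin x * cos x + x * (cos x ^ 2 - sin x ^ 2))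
      (2 - 3 * (cos x * cos x + sin x * (-sin x))
        + (1 * (cos x ^2 - sin x ^2) + x * (2 * cos x ^1 * (-sin x) - 2 * sin x ^1 * cos x))) x := by
    have h1 : HasDerivAt (fun x : ℝ => 2*x) 2 x := by
      simpa using (hasDerivAt_id x).const_mul 2
    have h2 : HasDerivAt (fun x : ℝ => 3 * sin x * cos x)
        (3 * (cos x * cos x + sin x * (-sin x))) x := by
      have := ((hasDerivAt_sin x).mul (hasDerivAt_cos x)).const_mul 3
      simpa [mul_assoc] using this
    have h3 : HasDerivAt (fun x : ℝ => x * (cos x ^ 2 - sin x ^ 2))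
        (1 * (cos x ^2 - sin x ^2) + x * (2 * cos x ^1 * (-sin x) - 2 * sin x ^1 * cos x)) x :=
      (hasDerivAt_id x).mul (((hasDerivAt_cos x).pow 2).sub ((hasDerivAt_sin x).pow 2))
    exact (h1.sub h2).add h3
  refine h.congr_deriv ?_
  have := sin_sq_add_cos_sq x
  nlinarith [this]

lemma Q'_pos {x : ℝ} (h1 : 0 < x) (h2 : x < π/2) : 0 < Q' x := by
  have key : StrictMonoOn Q' (Icc 0 (π/2)) := by
    apply strictMonoOn_of_deriv_pos (convex_Icc _ _)
      (fun y _ => (hasDerivAt_Q' y).differentiableAt.continuousAt.continuousWithinAt)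
    intro y hy
    rw [interior_Icc] at hy
    rw [(hasDerivAt_Q' y).deriv]
    have hs : 0 < sin y := sin_pos_of_pos_of_lt_pi hy.1 (by linarith [pi_gt_three, hy.2])
    have := sin_sub_mul_cos_pos hy.1 hy.2
    nlinarith
  have h0 : Q' 0 = 0 := by unfold Q'; simp
  have := key (left_mem_Icc.2 (by positivity)) ⟨h1.le, h2.le⟩ h1
  rwa [h0] at this

lemma Q_pos {x : ℝ} (h1 : 0 < x) (h2 : x < π/2) : 0 < Q x := by
  have key : StrictMonoOn Q (Icc 0 (π/2)) := by
    apply strictMonoOn_of_deriv_pos (convex_Icc _ _)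
      (fun y _ => (hasDerivAt_Q y).differentiableAt.continuousAt.continuousWithinAt)
    intro y hy
    rw [interior_Icc] at hy
    rw [(hasDerivAt_Q y).deriv]
    exact Q'_pos hy.1 hy.2
  have h0 : Q 0 = 0 := by unfold Q; simp
  have := key (left_mem_Icc.2 (by positivity)) ⟨h1.le, h2.le⟩ h1
  rwa [h0] at this


lemma alg_identity (x s c : ℝ) (hs : s ≠ 0) (hxs : x + s ≠ 0) (h1c : (1:ℝ) + c ≠ 0)
    (hp : s^2 + c^2 = 1) :
    (x^2 + x*s*c - 2*s^2) / (s^2*(x+s)) =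
      (c*(x+s) - s*(1+c))/(x+s)^2/(s/(x+s)) + (-s)/(1+c)
        - (1*(c/s) + x*((-s*s - c*c)/s^2)) := by
  have key : ((c*(x+s) - s*(1+c))/(x+s)^2/(s/(x+s)) + (-s)/(1+c)
        - (1*(c/s) + x*((-s*s - c*c)/s^2)))
      - (x^2 + x*s*c - 2*s^2) / (s^2*(x+s))
      = (s^2+c^2-1) * ((x*(1+c) - s)/(s^2*(1+c))) := by
    field_simp
    ring
  rw [hp] at key
  simp at key
  linear_combination -key


noncomputable def psi (x : ℝ) : ℝ :=
  log (sin x / (x + sin x)) + log (1 + cos x) - (x * (cos x / sin x) - 1)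

lemma hasDerivAt_psi {x : ℝ} (h1 : 0 < x) (h2 : x < π/2) :
    HasDerivAt psi (Q x / (sin x ^ 2 * (x + sin x))) x := by
  have hs : 0 < sin x := sin_pos_of_pos_of_lt_pi h1 (by linarith [pi_gt_three])
  have hc : 0 < cos x := cos_pos_of_mem_Ioo ⟨by linarith [pi_div_two_pos], h2⟩
  have hxs : 0 < x + sin x := by linarith
  have h1c : (0:ℝ) < 1 + cos x := by linarith
  have hu : HasDerivAt (fun y : ℝ => sin y / (y + sin y))
      ((cos x * (x + sin x) - sin x * (1 + cos x)) / (x + sin x)^2) x :=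
    (hasDerivAt_sin x).div ((hasDerivAt_id x).add (hasDerivAt_sin x)) hxs.ne'
  have hul : HasDerivAt (fun y : ℝ => log (sin y / (y + sin y)))
      (((cos x * (x + sin x) - sin x * (1 + cos x)) / (x + sin x)^2) / (sin x / (x + sin x))) x :=
    hu.log (by positivity)
  have h2l : HasDerivAt (fun y : ℝ => log (1 + cos y)) (-sin x / (1 + cos x)) x :=
    ((hasDerivAt_cos x).const_add 1).log h1c.ne'
  have h3 : HasDerivAt (fun y : ℝ => y * (cos y / sin y) - 1)
      (1 * (cos x / sin x) + x * ((-sin x * sin x - cos x * cos x) / sin x ^ 2)) x :=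
    ((hasDerivAt_id x).mul ((hasDerivAt_cos x).div (hasDerivAt_sin x) hs.ne')).sub_const 1
  have h := (hul.add h2l).sub h3
  refine h.congr_deriv ?_
  unfold Q
  exact (alg_identity x (sin x) (cos x) hs.ne' hxs.ne' h1c.ne' (sin_sq_add_cos_sq x)).symm

lemma tendsto_sin_div : Tendsto (fun x : ℝ => sin x / x) (𝓝[>] 0) (𝓝 1) := by
  have h := (hasDerivAt_sin 0)
  rw [hasDerivAt_iff_tendsto_slope] at h
  have h2 : Tendsto (fun x : ℝ => sin x / x) (𝓝[≠] 0) (𝓝 1) := by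
    simp only [slope_def_field, div_eq_mul_inv] at h ⊢
    convert h using 2 with x
    · simp [slope_def_field]; ring
    · simp
  exact h2.mono_left (nhdsWithin_mono _ (fun x hx => ne_of_gt hx))

lemma tendsto_x_cot : Tendsto (fun x : ℝ => x * (cos x / sin x)) (𝓝[>] 0) (𝓝 1) := by
  have hs : Tendsto (fun x : ℝ => sin x / x) (𝓝[>] 0) (𝓝 1) := tendsto_sin_div
  have hc : Tendsto (fun x : ℝ => cos x) (𝓝[>] 0) (𝓝 1) := by
    simpa using (continuous_cos.tendsto 0).mono_left nhdsWithin_le_nhds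
  have h := hc.div hs one_ne_zero
  rw [div_one] at h
  apply h.congr'
  filter_upwards [Ioo_mem_nhdsGT_of_mem (Set.mem_Ico.2 ⟨le_refl (0:ℝ), one_pos⟩)] with x hx
  have hsx : sin x ≠ 0 := ne_of_gt (sin_pos_of_pos_of_lt_pi hx.1 (by nlinarith [pi_gt_three, hx.2]))
  simp only [Pi.div_apply]
  field_simp

lemma tendsto_sin_div_add : Tendsto (fun x : ℝ => sin x / (x + sin x)) (𝓝[>] 0) (𝓝 (1/2)) := by
  have h := tendsto_sin_div.div ((tendsto_const_nhds.add tendsto_sin_div) :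
    Tendsto (fun x : ℝ => 1 + sin x / x) (𝓝[>] 0) (𝓝 (1 + 1))) (by norm_num)
  have : (1:ℝ) / (1+1) = 1/2 := by norm_num
  rw [this] at h
  apply h.congr'
  filter_upwards [Ioo_mem_nhdsGT_of_mem (Set.mem_Ico.2 ⟨le_refl (0:ℝ), one_pos⟩)] with x hx
  have hx0 : x ≠ 0 := hx.1.ne'
  have hsx : 0 < sin x := sin_pos_of_pos_of_lt_pi hx.1 (by nlinarith [pi_gt_three, hx.2])
  have hxs : x + sin x ≠ 0 := ne_of_gt (by linarith [hx.1])
  simp only [Pi.div_apply]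
  field_simp

lemma tendsto_psi : Tendsto psi (𝓝[>] 0) (𝓝 0) := by
  have h1 : Tendsto (fun x : ℝ => log (sin x / (x + sin x))) (𝓝[>] 0) (𝓝 (log (1/2))) :=
    (Real.continuousAt_log (by norm_num)).tendsto.comp tendsto_sin_div_add
  have h2 : Tendsto (fun x : ℝ => log (1 + cos x)) (𝓝[>] 0) (𝓝 (log 2)) := by
    have h0 : Tendsto (fun x : ℝ => 1 + cos x) (𝓝 0) (𝓝 2) := by
      have hcont : Continuous (fun x : ℝ => 1 + cos x) := continuous_const.add continuous_cos
      have h := hcont.tendsto 0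
      simpa [one_add_one_eq_two] using h
    have : Tendsto (fun x : ℝ => 1 + cos x) (𝓝[>] 0) (𝓝 2) := h0.mono_left nhdsWithin_le_nhds
    exact (Real.continuousAt_log (by norm_num)).tendsto.comp this
  have h3 : Tendsto (fun x : ℝ => x * (cos x / sin x) - 1) (𝓝[>] 0) (𝓝 0) := by
    have := tendsto_x_cot.sub (tendsto_const_nhds : Tendsto (fun _ : ℝ => (1:ℝ)) _ _)
    simpa using this
  have h := (h1.add h2).sub h3
  have hval : log (1/2) + log 2 - 0 = 0 := by
    rw [one_div, log_inv]; ring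
  rw [hval] at h
  exact h

lemma psi_mono : StrictMonoOn psi (Ioo 0 (π/2)) := by
  apply strictMonoOn_of_deriv_pos (convex_Ioo _ _)
  · intro y hy
    exact (hasDerivAt_psi hy.1 hy.2).differentiableAt.continuousAt.continuousWithinAt
  · intro y hy
    rw [interior_Ioo] at hy
    rw [(hasDerivAt_psi hy.1 hy.2).deriv]
    have hs : 0 < sin y := sin_pos_of_pos_of_lt_pi hy.1 (by linarith [pi_gt_three, hy.2])
    have hxs : 0 < y + sin y := by linarith [hy.1]
    exact div_pos (Q_pos hy.1 hy.2) (by positivity)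

lemma pos_of_mono_limit {f : ℝ → ℝ} {b : ℝ} (hm : StrictMonoOn f (Ioo 0 b))
    (hl : Tendsto f (𝓝[>] 0) (𝓝 0)) {x : ℝ} (hx : x ∈ Ioo 0 b) : 0 < f x := by
  have hm2 : x/2 ∈ Ioo 0 b := ⟨by linarith [hx.1], by linarith [hx.1, hx.2]⟩
  have h0 : 0 ≤ f (x/2) := by
    apply le_of_tendsto hl
    filter_upwards [Ioo_mem_nhdsGT_of_mem
      (Set.mem_Ico.2 ⟨le_refl (0:ℝ), half_pos hx.1⟩ : (0:ℝ) ∈ Ico 0 (x/2))] with t ht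
    exact (hm ⟨ht.1, by linarith [ht.2, hx.2, hx.1]⟩ hm2 ht.2).le
  have := hm hm2 hx (by linarith [hx.1])
  linarith

lemma psi_pos {x : ℝ} (hx : x ∈ Ioo 0 (π/2)) : 0 < psi x :=
  pos_of_mono_limit psi_mono tendsto_psi hx

lemma key_ineq {x : ℝ} (hx : x ∈ Ioo 0 (π/2)) :
    exp (x * (cos x / sin x) - 1) < sin x * (1 + cos x) / (x + sin x) := by
  have hs : 0 < sin x := sin_pos_of_pos_of_lt_pi hx.1 (by linarith [pi_gt_three, hx.2])
  have hc : 0 < cos x := cos_pos_of_mem_Ioo ⟨by linarith [pi_div_two_pos, hx.1], hx.2⟩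
  have hxs : 0 < x + sin x := by linarith [hx.1]
  have h1c : (0:ℝ) < 1 + cos x := by linarith
  have hA : (0:ℝ) < sin x * (1 + cos x) / (x + sin x) := by positivity
  have hp := psi_pos hx
  unfold psi at hp
  have hlog : log (sin x / (x + sin x)) + log (1 + cos x)
      = log (sin x * (1 + cos x) / (x + sin x)) := by
    rw [← log_mul (by positivity) h1c.ne']
    ring_nf
  rw [hlog] at hp
  calc exp (x * (cos x / sin x) - 1)
      < exp (log (sin x * (1 + cos x) / (x + sin x))) := exp_lt_exp.2 (by linarith)
    _ = sin x * (1 + cos x) / (x + sin x) := exp_log hA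


lemma alg_identity2 (x s c e : ℝ) (hs : s ≠ 0) (hp : s^2 + c^2 = 1) :
    c * (x * (c - e + 1)) - s * ((c - e + 1) + x * (-s - e * (1*(c/s) + x*((-s*s - c*c)/s^2))))
      = (x - s) * ((1+c) - e*(x+s)/s) := by
  have key : (c * (x * (c - e + 1)) - s * ((c - e + 1) + x * (-s - e * (1*(c/s) + x*((-s*s - c*c)/s^2)))))
      - (x - s) * ((1+c) - e*(x+s)/s)
      = (s^2+c^2-1) * (x*(s - e*x)/s) := by
    field_simp
    ring
  rw [hp] at key
  simp at key
  linear_combination key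

-- generic image lemma
lemma image_Ioo_of_mono {f : ℝ → ℝ} {a b l₁ l₂ : ℝ} (hab : a < b)
    (hm : StrictMonoOn f (Ioo a b)) (hc : ContinuousOn f (Ioo a b))
    (h1 : Tendsto f (𝓝[>] a) (𝓝 l₁)) (h2 : Tendsto f (𝓝[<] b) (𝓝 l₂)) :
    f '' Ioo a b = Ioo l₁ l₂ := by
  apply Subset.antisymm
  · rintro _ ⟨x, hx, rfl⟩
    constructor
    · have hm1 : (a + x)/2 ∈ Ioo a b := ⟨by linarith [hx.1], by linarith [hx.1, hx.2]⟩
      have hle : l₁ ≤ f ((a + x)/2) := by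
        apply le_of_tendsto h1
        filter_upwards [Ioo_mem_nhdsGT_of_mem
          (⟨le_refl a, by linarith [hx.1]⟩ : a ∈ Ico a ((a+x)/2))] with t ht
        exact (hm ⟨ht.1, by linarith [ht.2, hx.1, hx.2]⟩ hm1 ht.2).le
      exact lt_of_le_of_lt hle (hm hm1 hx (by linarith [hx.1]))
    · have hm2 : (x + b)/2 ∈ Ioo a b := ⟨by linarith [hx.1, hx.2], by linarith [hx.2]⟩
      have hle : f ((x + b)/2) ≤ l₂ := by
        apply ge_of_tendsto h2
        filter_upwards [Ioo_mem_nhdsLT_of_mem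
          (⟨by linarith [hx.2], le_refl b⟩ : b ∈ Ioc ((x+b)/2) b)] with t ht
        exact (hm hm2 ⟨by linarith [ht.1, hx.1, hx.2], ht.2⟩ ht.1).le
      exact lt_of_lt_of_le (hm hx hm2 (by linarith [hx.2])) hle
  · rintro y hy
    have hne1 : (𝓝[>] a).NeBot := nhdsGT_neBot a
    have hne2 : (𝓝[<] b).NeBot := nhdsLT_neBot b
    obtain ⟨t₁, ht₁y, ht₁⟩ := ((h1.eventually_lt_const hy.1).and
      (Ioo_mem_nhdsGT_of_mem (⟨le_refl a, hab⟩ : a ∈ Ico a b))).exists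
    obtain ⟨t₂, ht₂y, ht₂⟩ := ((h2.eventually_const_lt hy.2).and
      (Ioo_mem_nhdsLT_of_mem (⟨hab, le_refl b⟩ : b ∈ Ioc a b))).exists
    have h12 : t₁ < t₂ := by
      by_contra h
      push_neg at h
      rcases eq_or_lt_of_le h with h | h
      · rw [h] at ht₂y; linarith
      · have := hm ht₂ ht₁ h; linarith
    have hsub : Icc t₁ t₂ ⊆ Ioo a b := fun z hz => ⟨lt_of_lt_of_le ht₁.1 hz.1, lt_of_le_of_lt hz.2 ht₂.2⟩
    have := intermediate_value_Ioo h12.le (hc.mono hsub)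
    have hy' : y ∈ Ioo (f t₁) (f t₂) := ⟨ht₁y, ht₂y⟩
    obtain ⟨z, hz, hzy⟩ := this hy'
    exact ⟨z, ⟨lt_trans ht₁.1 hz.1, lt_trans hz.2 ht₂.2⟩, hzy⟩

noncomputable def F (x : ℝ) : ℝ := sin x / (x * (cos x - exp (x * (cos x / sin x) - 1) + 1))

lemma D_pos {x : ℝ} (hx : x ∈ Ioo 0 (π/2)) :
    0 < cos x - exp (x * (cos x / sin x) - 1) + 1 := by
  have hs : 0 < sin x := sin_pos_of_pos_of_lt_pi hx.1 (by linarith [pi_gt_three, hx.2])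
  have hxs : 0 < x + sin x := by linarith [hx.1]
  have h := key_ineq hx
  have h2 : sin x * (1 + cos x) / (x + sin x) < 1 + cos x := by
    rw [div_lt_iff₀ hxs]
    have h1c : (0:ℝ) < 1 + cos x := by
      have := cos_pos_of_mem_Ioo (⟨by linarith [pi_div_two_pos, hx.1], hx.2⟩ :
        x ∈ Ioo (-(π/2)) (π/2))
      linarith
    nlinarith [hx.1]
  linarith

lemma hasDerivAt_F {x : ℝ} (hx : x ∈ Ioo 0 (π/2)) :
    HasDerivAt F ((cos x * (x * (cos x - exp (x * (cos x / sin x) - 1) + 1))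
      - sin x * (1 * (cos x - exp (x * (cos x / sin x) - 1) + 1)
        + x * (-sin x - exp (x * (cos x / sin x) - 1)
          * (1 * (cos x / sin x) + x * ((-sin x * sin x - cos x * cos x) / sin x ^ 2)))))
      / (x * (cos x - exp (x * (cos x / sin x) - 1) + 1))^2) x := by
  have hs : 0 < sin x := sin_pos_of_pos_of_lt_pi hx.1 (by linarith [pi_gt_three, hx.2])
  have hinner : HasDerivAt (fun y : ℝ => y * (cos y / sin y) - 1)
      (1 * (cos x / sin x) + x * ((-sin x * sin x - cos x * cos x) / sin x ^ 2)) x :=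
    ((hasDerivAt_id x).mul ((hasDerivAt_cos x).div (hasDerivAt_sin x) hs.ne')).sub_const 1
  have hE : HasDerivAt (fun y : ℝ => exp (y * (cos y / sin y) - 1))
      (exp (x * (cos x / sin x) - 1)
        * (1 * (cos x / sin x) + x * ((-sin x * sin x - cos x * cos x) / sin x ^ 2))) x :=
    hinner.exp
  have hden : HasDerivAt (fun y : ℝ => y * (cos y - exp (y * (cos y / sin y) - 1) + 1))
      (1 * (cos x - exp (x * (cos x / sin x) - 1) + 1)
        + x * (-sin x - exp (x * (cos x / sin x) - 1)
          * (1 * (cos x / sin x) + x * ((-sin x * sin x - cos x * cos x) / sin x ^ 2)))) x :=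
    (hasDerivAt_id x).mul (((hasDerivAt_cos x).sub hE).add_const 1)
  have hne : x * (cos x - exp (x * (cos x / sin x) - 1) + 1) ≠ 0 :=
    ne_of_gt (mul_pos hx.1 (D_pos hx))
  exact (hasDerivAt_sin x).div hden hne

lemma F_deriv_num_pos {x : ℝ} (hx : x ∈ Ioo 0 (π/2)) :
    0 < cos x * (x * (cos x - exp (x * (cos x / sin x) - 1) + 1))
      - sin x * (1 * (cos x - exp (x * (cos x / sin x) - 1) + 1)
        + x * (-sin x - exp (x * (cos x / sin x) - 1)
          * (1 * (cos x / sin x) + x * ((-sin x * sin x - cos x * cos x) / sin x ^ 2)))) := by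
  have hs : 0 < sin x := sin_pos_of_pos_of_lt_pi hx.1 (by linarith [pi_gt_three, hx.2])
  have hxs : 0 < x + sin x := by linarith [hx.1]
  set e := exp (x * (cos x / sin x) - 1) with he
  have halg := alg_identity2 x (sin x) (cos x) e hs.ne' (sin_sq_add_cos_sq x)
  rw [one_mul]
  have hrw : cos x * (x * (cos x - e + 1))
      - sin x * ((cos x - e + 1)
        + x * (-sin x - e * (1 * (cos x / sin x) + x * ((-sin x * sin x - cos x * cos x) / sin x ^ 2))))
      = (x - sin x) * ((1 + cos x) - e * (x + sin x) / sin x) := halg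
  rw [hrw]
  apply mul_pos
  · linarith [sin_lt hx.1]
  · have h := key_ineq hx
    rw [← he] at h
    have h2 : e * (x + sin x) < sin x * (1 + cos x) := by
      rw [lt_div_iff₀ hxs] at h
      linarith
    have h3 : e * (x + sin x) / sin x < 1 + cos x := by
      rw [div_lt_iff₀ hs]
      nlinarith
    linarith

lemma F_mono : StrictMonoOn F (Ioo 0 (π/2)) := by
  apply strictMonoOn_of_deriv_pos (convex_Ioo _ _)
  · intro y hy
    exact (hasDerivAt_F hy).differentiableAt.continuousAt.continuousWithinAt
  · intro y hy
    rw [interior_Ioo] at hy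
    rw [(hasDerivAt_F hy).deriv]
    have hy0 : (0:ℝ) < y := hy.1
    exact div_pos (F_deriv_num_pos hy) (pow_pos (mul_pos hy.1 (D_pos hy)) 2)

lemma tendsto_F_zero : Tendsto F (𝓝[>] 0) (𝓝 1) := by
  have h3 : Tendsto (fun x : ℝ => x * (cos x / sin x) - 1) (𝓝[>] 0) (𝓝 0) := by
    have := tendsto_x_cot.sub (tendsto_const_nhds : Tendsto (fun _ : ℝ => (1:ℝ)) _ _)
    simpa using this
  have hexp : Tendsto (fun x : ℝ => exp (x * (cos x / sin x) - 1)) (𝓝[>] 0) (𝓝 1) := by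
    have := (Real.continuous_exp.tendsto 0).comp h3
    simpa [Function.comp_def] using this
  have hcos : Tendsto (fun x : ℝ => cos x) (𝓝[>] 0) (𝓝 1) := by
    simpa using (continuous_cos.tendsto 0).mono_left nhdsWithin_le_nhds
  have hD : Tendsto (fun x : ℝ => cos x - exp (x * (cos x / sin x) - 1) + 1) (𝓝[>] 0) (𝓝 1) := by
    have := (hcos.sub hexp).add (tendsto_const_nhds : Tendsto (fun _ : ℝ => (1:ℝ)) _ _)
    norm_num at this
    exact this
  have h := tendsto_sin_div.div hD one_ne_zero
  norm_num at h
  apply h.congr'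
  filter_upwards [self_mem_nhdsWithin] with x (hx : 0 < x)
  simp only [Pi.div_apply]
  unfold F
  rw [div_div]

lemma exp_one_gt_one : (1:ℝ) < exp 1 := by
  have h := add_one_le_exp (1:ℝ)
  linarith

lemma inv_exp_lt_one : (exp 1)⁻¹ < 1 := by
  have h1 := exp_one_gt_one
  have h2 := exp_pos 1
  rw [inv_lt_one_iff₀]
  right; exact h1

lemma F_pi_div_two : F (π/2) = 2 * exp 1 / (π * (exp 1 - 1)) := by
  have h1 := exp_one_gt_one
  have h0 : exp 1 ≠ 0 := (exp_pos 1).ne'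
  have hπ : π ≠ 0 := pi_ne_zero
  have hne : exp 1 - 1 ≠ 0 := by linarith
  unfold F
  rw [sin_pi_div_two, cos_pi_div_two]
  rw [show π/2 * (0/1) - 1 = -1 by norm_num]
  rw [exp_neg]
  rw [show (0:ℝ) - (exp 1)⁻¹ + 1 = (exp 1 - 1)/(exp 1) by field_simp; ring]
  field_simp

lemma tendsto_F_pi2 : Tendsto F (𝓝[<] (π/2)) (𝓝 (2 * exp 1 / (π * (exp 1 - 1)))) := by
  have hct : ContinuousAt F (π/2) := by
    apply ContinuousAt.div continuous_sin.continuousAt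
    · apply continuousAt_id.mul
      apply ContinuousAt.add _ continuousAt_const
      apply continuous_cos.continuousAt.sub
      apply ContinuousAt.comp Real.continuous_exp.continuousAt
      apply ContinuousAt.sub _ continuousAt_const
      exact continuousAt_id.mul (continuous_cos.continuousAt.div
        continuous_sin.continuousAt (by rw [sin_pi_div_two]; norm_num))
    · rw [cos_pi_div_two, sin_pi_div_two]
      norm_num
      · have h2 := inv_exp_lt_one
        intro hcon
        rw [exp_neg] at hcon
        linarith
  have := (hct.tendsto.mono_left (nhdsWithin_le_nhds (s := Iio (π/2))))
  rwa [F_pi_div_two] at this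

theorem sandor_lemma3 :
    StrictMonoOn (fun x : ℝ =>
        sin x / (x * (cos x - exp (x * (cos x / sin x) - 1) + 1))) (Ioo 0 (π/2)) ∧
    (fun x : ℝ =>
        sin x / (x * (cos x - exp (x * (cos x / sin x) - 1) + 1))) '' Ioo 0 (π/2) =
      Ioo 1 (2 * exp 1 / (π * (exp 1 - 1))) := by
  have hcont : ContinuousOn F (Ioo 0 (π/2)) := fun y hy =>
    (hasDerivAt_F hy).differentiableAt.continuousAt.continuousWithinAt
  exact ⟨F_mono, image_Ioo_of_mono pi_div_two_pos F_mono hcont tendsto_F_zero tendsto_F_pi2⟩
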